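/- Let {A_v}_{v∈V} be a finite collection of events in a probability space, where the index set V is the vertex set of a path graph G = (V,E) on n ≥ 1 vertices. Then Pr(⋃_{v∈V} A_v) ≥ (1/⌈n/2⌉) · ( Σ_{v∈V} Pr(A_v) − Σ_{{v,w}∈E} Pr(A_v ∩ A_w) ). -/

import Mathlib

open MeasureTheory Finset
open scoped Classical

theorem path_graph_lower_bound {Ω : Type*} [MeasurableSpace Ω]
    (μ : Measure Ω) [IsProbabilityMeasure μ] (n : ℕ) (hn : 1 ≤ n)
    (A : Fin n → Set Ω) (hA : ∀ v, MeasurableSet (A v)) :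
    (μ (⋃ v, A v)).toReal ≥
      (1 / (⌈(n : ℝ) / 2⌉₊ : ℝ)) *
        (∑ v, (μ (A v)).toReal -
          ∑ e ∈ (SimpleGraph.pathGraph n).edgeFinset,
            Sym2.lift ⟨fun v w => (μ (A v ∩ A w)).toReal,
              fun v w => by simp [Set.inter_comm]⟩ e) := by
  set f : Sym2 (Fin n) → ℝ := Sym2.lift ⟨fun v w => (μ (A v ∩ A w)).toReal,
      fun v w => by simp [Set.inter_comm]⟩ with hf
  set U : ℝ := (μ (⋃ v, A v)).toReal with hU
  set k : ℕ := ⌈(n : ℝ) / 2⌉₊ with hk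
  -- basic facts about k
  have hk1 : 1 ≤ k := by
    rw [hk]
    exact Nat.one_le_iff_ne_zero.mpr (by
      have : (0:ℝ) < (n:ℝ)/2 := by positivity
      simpa [Nat.ceil_eq_zero, not_le] using (Nat.ceil_pos.mpr this).ne')
  have hkn : n ≤ 2 * k := by
    have h1 : ((n:ℝ))/2 ≤ (k:ℝ) := Nat.le_ceil _
    have : (n:ℝ) ≤ 2 * (k:ℝ) := by linarith
    exact_mod_cast this
  -- auxiliary sequences
  set a : ℕ → ℝ := fun i => if h : i < n then (μ (A ⟨i, h⟩)).toReal else 0 with ha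
  set b : ℕ → ℝ := fun i =>
    if h : i + 1 < n then (μ (A ⟨i, Nat.lt_of_succ_lt h⟩ ∩ A ⟨i+1, h⟩)).toReal else 0 with hb
  have ha_nonneg : ∀ i, 0 ≤ a i := by
    intro i; rw [ha]; dsimp only; split <;> simp
  have hb_nonneg : ∀ i, 0 ≤ b i := by
    intro i; rw [hb]; dsimp only; split <;> simp
  have hU_nonneg : 0 ≤ U := ENNReal.toReal_nonneg
  have hsub : ∀ v : Fin n, A v ⊆ ⋃ w, A w := fun v => Set.subset_iUnion A v
  have hle : ∀ {S : Set Ω}, S ⊆ (⋃ w, A w) → (μ S).toReal ≤ U := by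
    intro S hS
    exact ENNReal.toReal_mono (measure_ne_top μ _) (measure_mono hS)
  -- sum over vertices
  have hva : ∑ v, (μ (A v)).toReal = ∑ i ∈ range n, a i := by
    rw [← Fin.sum_univ_eq_sum_range]
    apply Finset.sum_congr rfl
    intro v _
    rw [ha]; dsimp only; rw [dif_pos v.isLt]
  -- sum over edges
  have hea : ∑ e ∈ (SimpleGraph.pathGraph n).edgeFinset, f e = ∑ i ∈ range (n-1), b i := by
    rw [← Fin.sum_univ_eq_sum_range]
    symm
    apply Finset.sum_bij (i := fun (a : Fin (n-1)) _ =>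
      s((⟨a.1, by have := a.2; omega⟩ : Fin n), (⟨a.1+1, by have := a.2; omega⟩ : Fin n)))
    · intro x _
      rw [SimpleGraph.mem_edgeFinset, SimpleGraph.mem_edgeSet, SimpleGraph.pathGraph_adj]
      left; rfl
    · intro x _ y _ hxy
      rw [Sym2.eq_iff] at hxy
      have : x.1 = y.1 := by
        rcases hxy with ⟨h1, h2⟩ | ⟨h1, h2⟩ <;> simp [Fin.mk.injEq] at h1 h2 <;> omega
      exact Fin.ext this
    · intro e he
      rw [SimpleGraph.mem_edgeFinset] at he
      induction e using Sym2.ind with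
      | _ u v =>
        rw [SimpleGraph.mem_edgeSet, SimpleGraph.pathGraph_adj] at he
        rcases he with h | h
        · refine ⟨⟨u.1, by have := v.isLt; omega⟩, Finset.mem_univ _, ?_⟩
          have h1 : (⟨u.1, by have := v.isLt; omega⟩ : Fin n) = u := rfl
          have h2 : (⟨u.1 + 1, by have := v.isLt; omega⟩ : Fin n) = v := Fin.ext h
          rw [h1, h2]
        · refine ⟨⟨v.1, by have := u.isLt; omega⟩, Finset.mem_univ _, ?_⟩
          have h1 : (⟨v.1, by have := u.isLt; omega⟩ : Fin n) = v := rfl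
          have h2 : (⟨v.1 + 1, by have := u.isLt; omega⟩ : Fin n) = u := Fin.ext h
          rw [h1, h2, Sym2.eq_swap]
    · intro x _
      have hx : x.1 + 1 < n := by have := x.2; omega
      rw [hb]; dsimp only; rw [dif_pos hx, hf]
      simp
  -- pair bound
  have hpair : ∀ j : ℕ, a (2*j) + a (2*j+1) - b (2*j) ≤ U := by
    intro j
    by_cases h1 : 2*j+1 < n
    · have h0 : 2*j < n := Nat.lt_of_succ_lt h1
      rw [ha, hb]; dsimp only
      rw [dif_pos h0, dif_pos h1, dif_pos h1]
      set S := A ⟨2*j, h0⟩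
      set T := A ⟨2*j+1, h1⟩
      have hm := measure_union_add_inter (μ := μ) S (hA ⟨2*j+1, h1⟩)
      have h' : (μ (S ∪ T)).toReal + (μ (S ∩ T)).toReal = (μ S).toReal + (μ T).toReal := by
        rw [← ENNReal.toReal_add (measure_ne_top μ _) (measure_ne_top μ _),
          ← ENNReal.toReal_add (measure_ne_top μ _) (measure_ne_top μ _), hm]
      have hUb : (μ (S ∪ T)).toReal ≤ U :=
        hle (Set.union_subset (hsub _) (hsub _))
      linarith
    · by_cases h0 : 2*j < n
      · have e1 : a (2*j+1) = 0 := by rw [ha]; dsimp only; rw [dif_neg h1]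
        have e2 : b (2*j) = 0 := by rw [hb]; dsimp only; rw [dif_neg h1]
        have e3 : a (2*j) ≤ U := by
          rw [ha]; dsimp only; rw [dif_pos h0]; exact hle (hsub _)
        linarith
      · have e1 : a (2*j+1) = 0 := by rw [ha]; dsimp only; rw [dif_neg h1]
        have e2 : b (2*j) = 0 := by rw [hb]; dsimp only; rw [dif_neg h1]
        have e3 : a (2*j) = 0 := by rw [ha]; dsimp only; rw [dif_neg h0]
        linarith
  -- pairing the vertex sum
  have hpairsum : ∀ m : ℕ, ∑ i ∈ range (2*m), a i = ∑ j ∈ range m, (a (2*j) + a (2*j+1)) := by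
    intro m
    induction m with
    | zero => simp
    | succ m ih =>
      have h2 : 2*(m+1) = (2*m+1)+1 := by ring
      rw [h2, Finset.sum_range_succ, Finset.sum_range_succ, Finset.sum_range_succ, ih, add_assoc]
  have hext : ∑ i ∈ range n, a i = ∑ i ∈ range (2*k), a i := by
    apply Finset.sum_subset (Finset.range_subset_range.mpr hkn)
    intro i _ hi
    rw [Finset.mem_range, not_lt] at hi
    rw [ha]; dsimp only; rw [dif_neg (by omega)]
  -- the even-edge sum is at most the full edge sum
  have hbsum : ∑ j ∈ range k, b (2*j) ≤ ∑ i ∈ range (n-1), b i := by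
    have himg : ∑ j ∈ range k, b (2*j) = ∑ i ∈ (range k).image (fun j => 2*j), b i := by
      rw [Finset.sum_image (by intro x _ y _ h; dsimp only at h; omega)]
    rw [himg]
    have hsplit : ∑ i ∈ (range k).image (fun j => 2*j), b i
        = ∑ i ∈ ((range k).image (fun j => 2*j)) ∩ range (n-1), b i := by
      symm
      apply Finset.sum_subset (Finset.inter_subset_left)
      intro i _ hi
      rw [Finset.mem_inter, Finset.mem_range] at hi
      have : ¬ i < n - 1 := by tauto
      rw [hb]; dsimp only; rw [dif_neg (by omega)]
    rw [hsplit]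
    exact Finset.sum_le_sum_of_subset_of_nonneg Finset.inter_subset_right
      (fun i _ _ => hb_nonneg i)
  -- main inequality
  have hmain : ∑ v, (μ (A v)).toReal - ∑ e ∈ (SimpleGraph.pathGraph n).edgeFinset, f e
      ≤ (k : ℝ) * U := by
    rw [hva, hea, hext, hpairsum k]
    calc ∑ j ∈ range k, (a (2*j) + a (2*j+1)) - ∑ i ∈ range (n-1), b i
        ≤ ∑ j ∈ range k, (a (2*j) + a (2*j+1)) - ∑ j ∈ range k, b (2*j) := by linarith
      _ = ∑ j ∈ range k, (a (2*j) + a (2*j+1) - b (2*j)) := by rw [Finset.sum_sub_distrib]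
      _ ≤ ∑ _j ∈ range k, U := Finset.sum_le_sum (fun j _ => hpair j)
      _ = (k : ℝ) * U := by rw [Finset.sum_const, Finset.card_range, nsmul_eq_mul]
  have hkpos : (0:ℝ) < (k:ℝ) := by exact_mod_cast hk1
  rw [ge_iff_le, one_div, inv_mul_le_iff₀ hkpos]
  linarith
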